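/- Let ω : [0,∞) → [0,∞) be concave, increasing, and differentiable, and let x < y. Suppose ω'(y) = ((n−1)/n)·ω'(x) for an integer n ≥ 2. Then there exists z ∈ [x, y] such that ω(y) − ω(z) = (n−1)·(ω(x) + (y−x)·ω'(x) − ω(y)). -/

import Mathlib

open Set

theorem stmt11 (ω : ℝ → ℝ) (hpos : ∀ t ≥ (0:ℝ), 0 ≤ ω t)
    (hconc : ConcaveOn ℝ (Ici 0) ω) (hmono : MonotoneOn ω (Ici 0))
    (hdiff : ∀ t ∈ Ici (0:ℝ), DifferentiableAt ℝ ω t)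
    (n : ℕ) (hn : 2 ≤ n) (x y : ℝ) (hx : 0 ≤ x) (hxy : x < y)
    (hderiv : deriv ω y = ((n - 1 : ℝ) / n) * deriv ω x) :
    ∃ z ∈ Icc x y,
      ω y - ω z = (n - 1 : ℝ) * (ω x + (y - x) * deriv ω x - ω y) := by
  have hy : (0:ℝ) ≤ y := hx.trans hxy.le
  have hxS : x ∈ Ici (0:ℝ) := hx
  have hyS : y ∈ Ici (0:ℝ) := hy
  have hconv : ConvexOn ℝ (Ici 0) (-ω) := hconc.neg
  have hdx : DifferentiableAt ℝ ω x := hdiff x hxS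
  have hdy : DifferentiableAt ℝ ω y := hdiff y hyS
  -- slope bounds
  have h1 : deriv (-ω) x ≤ slope (-ω) x y := hconv.deriv_le_slope hxS hyS hxy hdx.neg
  have h2 : slope (-ω) x y ≤ deriv (-ω) y := hconv.slope_le_deriv hxS hyS hxy hdy.neg
  have hslope_neg : slope (-ω) x y = -slope ω x y := by
    simp [slope_def_field]; ring
  have hdnx : deriv (-ω) x = -deriv ω x := by
    rw [show (-ω) = fun t => -ω t from rfl, deriv.fun_neg]
  have hdny : deriv (-ω) y = -deriv ω y := by
    rw [show (-ω) = fun t => -ω t from rfl, deriv.fun_neg]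
  rw [hdnx, hslope_neg] at h1
  rw [hdny, hslope_neg] at h2
  have hs_le : slope ω x y ≤ deriv ω x := by linarith
  have hdy_le : deriv ω y ≤ slope ω x y := by linarith
  have hyx : (0:ℝ) < y - x := by linarith
  have hslope : slope ω x y = (ω y - ω x) / (y - x) := by
    simp [slope_def_field]
  have hsecant : ω y - ω x = slope ω x y * (y - x) := by
    rw [hslope]; field_simp
  set s := slope ω x y with hs
  set d := deriv ω x with hd
  have hn1 : (1:ℝ) ≤ (n:ℝ) - 1 := by
    have : (2:ℝ) ≤ (n:ℝ) := by exact_mod_cast hn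
    linarith
  have hnpos : (0:ℝ) < (n:ℝ) := by linarith
  have hnd : (n:ℝ) * deriv ω y = ((n:ℝ) - 1) * d := by
    rw [hderiv]; field_simp
  set T := (n - 1 : ℝ) * (ω x + (y - x) * d - ω y) with hT
  have hT' : T = ((n:ℝ) - 1) * (y - x) * (d - s) := by
    rw [hT]; linear_combination (-((n:ℝ)-1)) * hsecant
  have hT0 : 0 ≤ T := by
    rw [hT']
    have : 0 ≤ d - s := by linarith
    positivity
  have hTle : T ≤ ω y - ω x := by
    rw [hT', hsecant]
    nlinarith [mul_le_mul_of_nonneg_left hdy_le hnpos.le]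
  -- IVT for f z = ω y - ω z
  have hcont : ContinuousOn (fun z => ω y - ω z) (Icc x y) := by
    intro t ht
    have : DifferentiableAt ℝ ω t := hdiff t (le_trans hx ht.1)
    exact (continuousAt_const.sub this.continuousAt).continuousWithinAt
  have hIVT := intermediate_value_Icc' hxy.le hcont
  have hmem : T ∈ Icc ((fun z => ω y - ω z) y) ((fun z => ω y - ω z) x) := by
    simp only [sub_self]
    exact ⟨hT0, hTle⟩
  obtain ⟨z, hz, hzT⟩ := hIVT hmem
  exact ⟨z, hz, hzT⟩
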